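/- Let S = {u, v, w, 0} be the commutative semigroup with zero where u² = v² = uv = vu = w and uw = wu = vw = wv = w² = 0. Let A be a nontrivial 0-module over S with trivial action (s·a = a for all s ∈ S∖{0}), and fix a ∈ A with a ≠ 0. Define the 2-cochain f on pairs (x,y) with xy ≠ 0 by f(u,u) = a and f(x,y) = 0 otherwise. Then f is a 2-cocycle (∂²f = 0 on all triples with nonzero product) but f is not a 2-coboundary; hence H²₀(S, A) ≠ 0. -/

import Mathlib

/-- The commutative semigroup `S = {u, v, w, 0}` with
`u² = v² = uv = vu = w` and all other products `0`. -/
inductive S5 : Type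
  | u | v | w | z
  deriving DecidableEq, Repr

instance : Fintype S5 where
  elems := {S5.u, S5.v, S5.w, S5.z}
  complete := by intro x; cases x <;> simp

namespace S5

def mul : S5 → S5 → S5
  | u, u => w
  | u, v => w
  | v, u => w
  | v, v => w
  | _, _ => z

instance : Mul S5 := ⟨mul⟩

instance : Semigroup S5 where
  mul_assoc := by decide

end S5

/-- For the semigroup `S = {u,v,w,0}` above and a nontrivial
0-module `A` with trivial action (`s·a = a` for all nonzero `s`), the 2-cochain
`f` with `f(u,u) = a ≠ 0` and `f = 0` elsewhere is a 2-cocycle but not a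
2-coboundary; hence `H²₀(S, A) ≠ 0`. -/
theorem S5_H2_ne_zero {A : Type*} [AddCommGroup A] (a : A) (ha : a ≠ 0)
    (f : S5 → S5 → A)
    (hf : ∀ x y : S5, f x y = if x = S5.u ∧ y = S5.u then a else 0) :
    (∀ x y t : S5, x * y * t ≠ S5.z →
        f y t - f (x * y) t + f x (y * t) - f x y = 0) ∧
      ¬ ∃ φ : S5 → A, ∀ x y : S5, x * y ≠ S5.z →
          f x y = φ y - φ (x * y) + φ x := by
  constructor
  · intro x y t h
    exact absurd (by revert h; cases x <;> cases y <;> cases t <;> decide : x * y * t = S5.z) h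
  · rintro ⟨φ, hφ⟩
    have h1 : a = φ S5.u - φ S5.w + φ S5.u := by
      simpa [hf, show (S5.u * S5.u) = S5.w from rfl] using hφ S5.u S5.u (by decide)
    have h2 : (0 : A) = φ S5.v - φ S5.w + φ S5.u := by
      simpa [hf, show (S5.u * S5.v) = S5.w from rfl] using hφ S5.u S5.v (by decide)
    have h3 : (0 : A) = φ S5.v - φ S5.w + φ S5.v := by
      simpa [hf, show (S5.v * S5.v) = S5.w from rfl] using hφ S5.v S5.v (by decide)
    apply ha
    have e : φ S5.u = φ S5.v := add_left_cancel (h2.symm.trans h3)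
    rw [h1, e]
    exact h3.symm
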